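/- Let I, J be intervals with J ⊆ [ξ₀, ∞), and let p ∈ C²([ξ₀,∞)) satisfy c θ^{α−1} ≤ |p''(θ)| ≤ C θ^{α−1} for all θ ≥ ξ₀ with p'' continuous and of constant sign on [ξ₀,∞), where α ≥ 1. Let ξ ∈ ℤ, ξ ≥ 0, and L ≥ 1 with ξ ≥ L^{1/(α+1)} + 2ξ₀ + 2. Then the number of integers ξ₁ ∈ [ξ₀, ξ/2] with (ξ − 2ξ₁)^{α+1} ≥ L and |τ + p(ξ₁) + p(ξ − ξ₁)| ≤ A·L (for any fixed τ ∈ ℝ and constant A) is at most C' L^{1/(α+1)} for a constant C' depending only on c, C, α, A. -/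

import Mathlib

open Real
noncomputable section

/-- the counting step in the proof of the bilinear Strichartz estimate:
under the stated curvature bounds on `p`, for `ξ ≥ L^{1/(α+1)} + 2ξ₀ + 2` the number of
integers `ξ₁ ∈ [ξ₀, ξ/2]` with `(ξ − 2ξ₁)^{α+1} ≥ L` and `|τ + p(ξ₁) + p(ξ−ξ₁)| ≤ A·L`
is at most `C' L^{1/(α+1)}`. -/
theorem strichartz_counting_step
    (α c C A ξ₀ : ℝ) (hα : 1 ≤ α) (hc : 0 < c) (hCc : c ≤ C) (hA : 0 < A)
    (hξ₀ : 0 ≤ ξ₀)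
    (p : ℝ → ℝ) (hp : ContDiffOn ℝ 2 p (Set.Ici ξ₀))
    (hpp : ∀ θ : ℝ, ξ₀ ≤ θ →
      c * θ ^ (α - 1) ≤ |deriv (deriv p) θ| ∧ |deriv (deriv p) θ| ≤ C * θ ^ (α - 1))
    (hsign : ∀ θ₁ θ₂ : ℝ, ξ₀ ≤ θ₁ → ξ₀ ≤ θ₂ →
      0 ≤ deriv (deriv p) θ₁ * deriv (deriv p) θ₂)
    (hcont : ContinuousOn (deriv (deriv p)) (Set.Ici ξ₀)) :
    ∃ C' > 0, ∀ (ξ : ℤ) (L τ : ℝ), 0 ≤ ξ → 1 ≤ L →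
      L ^ (1 / (α + 1)) + 2 * ξ₀ + 2 ≤ (ξ : ℝ) →
      ({ξ₁ : ℤ | ξ₀ ≤ (ξ₁ : ℝ) ∧ (ξ₁ : ℝ) ≤ (ξ : ℝ) / 2 ∧
          L ≤ ((ξ : ℝ) - 2 * (ξ₁ : ℝ)) ^ (α + 1) ∧
          |τ + p (ξ₁ : ℝ) + p ((ξ : ℝ) - (ξ₁ : ℝ))| ≤ A * L}.ncard : ℝ)
        ≤ C' * L ^ (1 / (α + 1)) := by
  set q := deriv p with hq
  set r := deriv (deriv p) with hr
  have hα1 : (0:ℝ) < α + 1 := by linarith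
  -- differentiability facts
  have hpD : ∀ θ : ℝ, ξ₀ < θ → HasDerivAt p (q θ) θ := by
    intro θ hθ
    exact ((hp.differentiableOn (by norm_num)).differentiableAt (Ici_mem_nhds hθ)).hasDerivAt
  have hqD : ∀ θ : ℝ, ξ₀ < θ → HasDerivAt q (r θ) θ := by
    intro θ hθ
    have h1 : ContDiffOn ℝ 2 p (Set.Ioi ξ₀) := hp.mono Set.Ioi_subset_Ici_self
    have h2 : ContDiffOn ℝ 1 (deriv p) (Set.Ioi ξ₀) :=
      ((contDiffOn_succ_iff_deriv_of_isOpen (n := 1) isOpen_Ioi).mp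
        (by norm_num at h1 ⊢; exact h1)).2.2
    exact ((h2.differentiableOn (by norm_num)).differentiableAt (Ioi_mem_nhds hθ)).hasDerivAt
  -- constant sign
  obtain ⟨s, hs1, hsr⟩ : ∃ s : ℝ, |s| = 1 ∧ ∀ θ, ξ₀ ≤ θ → c * θ ^ (α - 1) ≤ s * r θ := by
    have hne : r (ξ₀ + 1) ≠ 0 := by
      have h1 := (hpp (ξ₀ + 1) (by linarith)).1
      have h2 : (0:ℝ) < c * (ξ₀ + 1) ^ (α - 1) := by positivity
      intro h; rw [h] at h1; simp at h1; linarith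
    rcases hne.lt_or_gt with h | h
    · refine ⟨-1, by norm_num, fun θ hθ => ?_⟩
      have h0 : r θ ≤ 0 := by
        by_contra hneg
        push_neg at hneg
        have := hsign θ (ξ₀ + 1) hθ (by linarith)
        nlinarith
      have := (hpp θ hθ).1
      rw [abs_of_nonpos h0] at this
      linarith
    · refine ⟨1, by norm_num, fun θ hθ => ?_⟩
      have h0 : 0 ≤ r θ := by
        by_contra hneg
        push_neg at hneg
        have := hsign θ (ξ₀ + 1) hθ (by linarith)
        nlinarith
      have := (hpp θ hθ).1
      rw [abs_of_nonneg h0] at this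
      linarith
  refine ⟨2 ^ (α + 2) * A / c + 3, by positivity, ?_⟩
  intro ξ L τ hξ hL hξge
  set D := L ^ (1 / (α + 1)) with hDdef
  have hLpos : (0:ℝ) < L := by linarith
  have hDpos : 0 < D := Real.rpow_pos_of_pos hLpos _
  have hD1 : 1 ≤ D := Real.one_le_rpow hL (by positivity)
  have hLD : D ^ α * D = L := by
    have h1 : D ^ (α + 1) = L := by
      rw [hDdef, ← Real.rpow_mul hLpos.le]
      rw [one_div_mul_cancel hα1.ne', Real.rpow_one]
    calc D ^ α * D = D ^ α * D ^ (1:ℝ) := by rw [Real.rpow_one]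
      _ = D ^ (α + 1) := (Real.rpow_add hDpos α 1).symm
      _ = L := h1
  set S := {ξ₁ : ℤ | ξ₀ ≤ (ξ₁ : ℝ) ∧ (ξ₁ : ℝ) ≤ (ξ : ℝ) / 2 ∧
          L ≤ ((ξ : ℝ) - 2 * (ξ₁ : ℝ)) ^ (α + 1) ∧
          |τ + p (ξ₁ : ℝ) + p ((ξ : ℝ) - (ξ₁ : ℝ))| ≤ A * L} with hS
  rcases Set.eq_empty_or_nonempty S with hSe | ⟨x₀, hx₀⟩
  · rw [hSe]; simp; positivity
  -- every member satisfies D ≤ ξ - 2x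
  have hmemD : ∀ x : ℤ, x ∈ S → D ≤ (ξ:ℝ) - 2 * x := by
    intro x hx
    obtain ⟨h1, h2, h3, h4⟩ := hx
    have ht0 : (0:ℝ) ≤ (ξ:ℝ) - 2 * x := by linarith
    calc D ≤ (((ξ:ℝ) - 2 * x) ^ (α + 1)) ^ (1 / (α + 1)) :=
          Real.rpow_le_rpow hLpos.le h3 (by positivity)
      _ = (ξ:ℝ) - 2 * x := by
          rw [← Real.rpow_mul ht0, mul_one_div, div_self hα1.ne', Real.rpow_one]
  -- key integral lower bound
  have key : ∀ ζ : ℝ, ξ₀ < ζ → D ≤ (ξ:ℝ) - 2 * ζ →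
      c * (D / 2) ^ α ≤ s * (q ((ξ:ℝ) - ζ) - q ζ) := by
    intro ζ hζ hζD
    set m : ℝ := (ξ:ℝ) / 2 with hm
    set b : ℝ := (ξ:ℝ) - ζ with hb
    have hζm : ζ ≤ m := by simp only [hm]; linarith
    have hmb : m ≤ b := by simp only [hm, hb]; linarith
    have hmξ₀ : ξ₀ < m := by linarith
    have hint : ∀ u v : ℝ, ζ ≤ u → u ≤ v → v ≤ b → IntervalIntegrable r MeasureTheory.volume u v := by
      intro u v h1 h2 h3
      apply ContinuousOn.intervalIntegrable
      apply hcont.mono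
      rw [Set.uIcc_of_le h2]
      intro y hy
      simp only [Set.mem_Icc] at hy
      exact Set.mem_Ici.mpr (by linarith)
    have hftc : ∫ θ in ζ..b, r θ = q b - q ζ := by
      apply intervalIntegral.integral_eq_sub_of_hasDerivAt
      · intro θ hθ
        rw [Set.uIcc_of_le (by linarith : ζ ≤ b)] at hθ
        exact hqD θ (by linarith [hθ.1])
      · exact hint ζ b le_rfl (by linarith) le_rfl
    have hsplit : (∫ θ in ζ..m, s * r θ) + (∫ θ in m..b, s * r θ) = ∫ θ in ζ..b, s * r θ :=
      intervalIntegral.integral_add_adjacent_intervals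
        ((hint ζ m le_rfl hζm hmb).const_mul s) ((hint m b hζm hmb le_rfl).const_mul s)
    have h1 : 0 ≤ ∫ θ in ζ..m, s * r θ := by
      apply intervalIntegral.integral_nonneg hζm
      intro u hu
      have := hsr u (by linarith [hu.1])
      have hupos : (0:ℝ) ≤ u ^ (α - 1) := Real.rpow_nonneg (by linarith [hu.1]) _
      nlinarith
    have h2 : c * (D/2) ^ α ≤ ∫ θ in m..b, s * r θ := by
      have hconst : ∫ θ in m..b, c * (D/2) ^ (α-1) = (b - m) * (c * (D/2) ^ (α-1)) := by
        rw [intervalIntegral.integral_const]; simp [smul_eq_mul]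
      have hmono : (∫ θ in m..b, c * (D/2) ^ (α-1)) ≤ ∫ θ in m..b, s * r θ := by
        apply intervalIntegral.integral_mono_on hmb
        · exact intervalIntegrable_const
        · exact (hint m b hζm hmb le_rfl).const_mul s
        · intro u hu
          have hu1 : ξ₀ ≤ u := by linarith [hu.1]
          have hD2 : D/2 ≤ u := by
            have : D/2 ≤ m := by simp only [hm]; linarith
            linarith [hu.1]
          calc c * (D/2) ^ (α-1) ≤ c * u ^ (α-1) := by
                have := Real.rpow_le_rpow (by positivity : (0:ℝ) ≤ D/2) hD2 (by linarith : (0:ℝ) ≤ α - 1)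
                nlinarith
            _ ≤ s * r u := hsr u hu1
      have hbm : D/2 ≤ b - m := by simp only [hm, hb]; linarith
      have hfin : c * (D/2) ^ α ≤ (b - m) * (c * (D/2) ^ (α-1)) := by
        have hsplit2 : (D/2) ^ α = (D/2) ^ (α-1) * (D/2) := by
          have h := Real.rpow_add (show (0:ℝ) < D/2 by positivity) (α-1) 1
          rw [Real.rpow_one, sub_add_cancel] at h
          exact h
        rw [hsplit2]
        calc c * ((D/2) ^ (α-1) * (D/2)) = (D/2) * (c * (D/2) ^ (α-1)) := by ring
          _ ≤ (b - m) * (c * (D/2) ^ (α-1)) :=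
            mul_le_mul_of_nonneg_right hbm (by positivity)
      linarith [hconst ▸ hmono]
    have hfc : s * (q b - q ζ) = ∫ θ in ζ..b, s * r θ := by
      rw [intervalIntegral.integral_const_mul, hftc]
    rw [hfc, ← hsplit]
    linarith
  -- two points in S are close
  have key2 : ∀ x x' : ℤ, x ∈ S → x' ∈ S → x < x' →
      ((x':ℝ) - x) * (c * (D/2) ^ α) ≤ 2 * (A * L) := by
    intro x x' hx hx' hlt
    have hltR : (x:ℝ) < (x':ℝ) := by exact_mod_cast hlt
    have hx1 := hx.1
    have hx'2 := hx'.2.1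
    have hDx' := hmemD x' hx'
    set g : ℝ → ℝ := fun t => τ + p t + p ((ξ:ℝ) - t) with hg
    have hgd : ∀ t ∈ Set.Ioo (x:ℝ) (x':ℝ), HasDerivAt g (q t - q ((ξ:ℝ) - t)) t := by
      intro t ht
      have ht1 : ξ₀ < t := by linarith [ht.1]
      have ht2 : ξ₀ < (ξ:ℝ) - t := by
        have : (t:ℝ) < x' := ht.2
        have hx'0 : ξ₀ ≤ (x':ℝ) := hx'.1
        linarith
      have h1 := hpD t ht1
      have h2 := hpD ((ξ:ℝ) - t) ht2
      have h3 : HasDerivAt (fun u : ℝ => (ξ:ℝ) - u) (-1) t := by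
        simpa using (hasDerivAt_id t).const_sub (ξ:ℝ)
      have h4 : HasDerivAt (fun u : ℝ => p ((ξ:ℝ) - u)) (q ((ξ:ℝ) - t) * (-1)) t :=
        h2.comp t h3
      have h5 : HasDerivAt g (0 + q t + q ((ξ:ℝ) - t) * (-1)) t := ((hasDerivAt_const t τ).add h1).add h4
      convert h5 using 1
      ring
    have hgc : ContinuousOn g (Set.Icc (x:ℝ) (x':ℝ)) := by
      have hpc : ContinuousOn p (Set.Ici ξ₀) := hp.continuousOn
      have hc1 : ContinuousOn (fun t : ℝ => p t) (Set.Icc (x:ℝ) (x':ℝ)) :=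
        hpc.mono (fun y hy => Set.mem_Ici.mpr (by
          simp only [Set.mem_Icc] at hy; linarith [hy.1]))
      have hc2 : ContinuousOn (fun t : ℝ => p ((ξ:ℝ) - t)) (Set.Icc (x:ℝ) (x':ℝ)) := by
        apply hpc.comp ((continuous_const.sub continuous_id).continuousOn)
        intro y hy
        simp only [Set.mem_Icc] at hy
        refine Set.mem_Ici.mpr ?_
        have hx'0 : ξ₀ ≤ (x':ℝ) := hx'.1
        show ξ₀ ≤ (ξ:ℝ) - y
        linarith [hy.2]
      exact (continuousOn_const.add hc1).add hc2
    obtain ⟨ζ, hζmem, hζeq⟩ := exists_hasDerivAt_eq_slope g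
      (fun t => q t - q ((ξ:ℝ) - t)) hltR hgc hgd
    have hζ1 : ξ₀ < ζ := by linarith [hζmem.1]
    have hζD : D ≤ (ξ:ℝ) - 2 * ζ := by linarith [hζmem.2]
    have hk := key ζ hζ1 hζD
    have habs : c * (D/2) ^ α ≤ |q ζ - q ((ξ:ℝ) - ζ)| := by
      calc c * (D/2) ^ α ≤ s * (q ((ξ:ℝ) - ζ) - q ζ) := hk
        _ ≤ |s * (q ((ξ:ℝ) - ζ) - q ζ)| := le_abs_self _
        _ = |s| * |q ((ξ:ℝ) - ζ) - q ζ| := abs_mul _ _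
        _ = |q ζ - q ((ξ:ℝ) - ζ)| := by rw [hs1, one_mul, abs_sub_comm]
    have hgx : |g (x:ℝ)| ≤ A * L := hx.2.2.2
    have hgx' : |g (x':ℝ)| ≤ A * L := hx'.2.2.2
    have hslope : |g (x':ℝ) - g (x:ℝ)| ≤ 2 * (A * L) := by
      calc |g (x':ℝ) - g (x:ℝ)| ≤ |g (x':ℝ)| + |g (x:ℝ)| := abs_sub _ _
        _ ≤ 2 * (A * L) := by linarith
    have hdpos : (0:ℝ) < (x':ℝ) - x := by linarith
    have : |q ζ - q ((ξ:ℝ) - ζ)| = |g (x':ℝ) - g (x:ℝ)| / ((x':ℝ) - x) := by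
      rw [hζeq]; rw [abs_div, abs_of_pos hdpos]
    rw [this] at habs
    calc ((x':ℝ) - x) * (c * (D/2) ^ α) ≤ |g (x':ℝ) - g (x:ℝ)| := by
          rw [le_div_iff₀ hdpos] at habs; linarith [habs]
      _ ≤ 2 * (A * L) := hslope
  -- counting
  set M : ℝ := c * (D/2) ^ α with hMdef
  have hMpos : (0:ℝ) < M := by positivity
  set B : ℝ := 2 * (A * L) / M with hBdef
  have hBpos : (0:ℝ) ≤ B := by positivity
  have hdist : ∀ x ∈ S, |(x:ℝ) - (x₀:ℝ)| * M ≤ 2 * (A * L) := by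
    intro x hx
    rcases lt_trichotomy x x₀ with h | h | h
    · have hcast : (x:ℝ) < (x₀:ℝ) := by exact_mod_cast h
      rw [abs_of_nonpos (by linarith : (x:ℝ) - (x₀:ℝ) ≤ 0)]
      have h2 := key2 x x₀ hx hx₀ h
      have h3 : -((x:ℝ) - (x₀:ℝ)) * M = ((x₀:ℝ) - (x:ℝ)) * M := by ring
      rw [h3]; exact h2
    · subst h; simp; positivity
    · have hcast : (x₀:ℝ) < (x:ℝ) := by exact_mod_cast h
      rw [abs_of_nonneg (by linarith : (0:ℝ) ≤ (x:ℝ) - (x₀:ℝ))]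
      exact key2 x₀ x hx₀ hx h
  set k : ℤ := ⌈B⌉ with hk
  have hk0 : (0:ℤ) ≤ k := Int.ceil_nonneg hBpos
  have hsub : S ⊆ ↑(Finset.Icc (x₀ - k) (x₀ + k)) := by
    intro x hx
    simp only [Finset.coe_Icc, Set.mem_Icc]
    have h1 : |(x:ℝ) - (x₀:ℝ)| ≤ B := by
      rw [hBdef, le_div_iff₀ hMpos]
      exact hdist x hx
    have h2 : |(x:ℝ) - (x₀:ℝ)| ≤ (k:ℝ) := h1.trans (Int.le_ceil B)
    rw [abs_le] at h2
    constructor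
    · have : (x₀:ℝ) - (k:ℝ) ≤ (x:ℝ) := by linarith [h2.1]
      exact_mod_cast this
    · have : (x:ℝ) ≤ (x₀:ℝ) + (k:ℝ) := by linarith [h2.2]
      exact_mod_cast this
  have hcard : (S.ncard : ℝ) ≤ 2 * (k:ℝ) + 1 := by
    have h1 : S.ncard ≤ (Finset.Icc (x₀ - k) (x₀ + k)).card := by
      rw [← Set.ncard_coe_finset]
      exact Set.ncard_le_ncard hsub (Finset.finite_toSet _)
    have h2 : (Finset.Icc (x₀ - k) (x₀ + k)).card = (2 * k + 1).toNat := by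
      rw [Int.card_Icc]; congr 1; ring
    have h3 : ((2 * k + 1).toNat : ℝ) = 2 * (k:ℝ) + 1 := by
      have h4 : ((2 * k + 1).toNat : ℤ) = 2 * k + 1 :=
        Int.toNat_of_nonneg (by linarith)
      exact_mod_cast h4
    calc (S.ncard : ℝ) ≤ (((2 * k + 1).toNat : ℕ) : ℝ) := by
          exact_mod_cast h1.trans_eq h2
      _ = 2 * (k:ℝ) + 1 := h3
  have hkB : (k:ℝ) ≤ B + 1 := le_of_lt (Int.ceil_lt_add_one B)
  have hDα : (0:ℝ) < D ^ α := Real.rpow_pos_of_pos hDpos α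
  have h2α : (0:ℝ) < (2:ℝ) ^ α := Real.rpow_pos_of_pos two_pos α
  have hhalf : (D/2) ^ α = D ^ α / 2 ^ α := Real.div_rpow hDpos.le (by norm_num) α
  have h2a2 : (2:ℝ) ^ (α + 2) = 2 ^ α * 4 := by
    rw [Real.rpow_add two_pos]
    rw [Real.rpow_two]
    norm_num
  have hB2 : 2 * B = 2 ^ (α + 2) * A / c * D := by
    rw [hBdef, hMdef, hhalf, h2a2, ← hLD]
    field_simp
    ring
  have hgoal : (2 ^ (α + 2) * A / c + 3) * D = 2 ^ (α + 2) * A / c * D + 3 * D := by ring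
  have hApos : (0:ℝ) ≤ 2 ^ (α + 2) * A / c := by positivity
  calc (S.ncard : ℝ) ≤ 2 * (k:ℝ) + 1 := hcard
    _ ≤ 2 * B + 3 := by linarith
    _ ≤ 2 ^ (α + 2) * A / c * D + 3 * D := by rw [hB2]; linarith
    _ = (2 ^ (α + 2) * A / c + 3) * D := hgoal.symm
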